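/- Fix n ≥ 1, d ≥ 1, a unit vector θ ∈ ℝ^d, and point configurations x, y, z : Fin n → ℝ^d. For all θ-sorting permutations σ for x, τ for y, and π for z, the square roots of the SWGG values satisfy the triangle inequality: √(SWGG(x,z,θ;σ,π)) ≤ √(SWGG(x,y,θ;σ,τ)) + √(SWGG(y,z,θ;τ,π)). -/

import Mathlib

open scoped RealInnerProductSpace

/-- The SWGG value associated to configurations `x, y` and permutations `σ, τ`:
`(1/n) Σ_i ‖x_{σ(i)} − y_{τ(i)}‖²`. -/
noncomputable def SWGG {n d : ℕ} (x y : Fin n → EuclideanSpace ℝ (Fin d))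
    (σ τ : Equiv.Perm (Fin n)) : ℝ :=
  (n : ℝ)⁻¹ * ∑ i, ‖x (σ i) - y (τ i)‖ ^ 2

/-- A permutation `σ` is θ-sorting for `x` if `i ↦ ⟨x_{σ(i)}, θ⟩` is nondecreasing. -/
def IsSorting {n d : ℕ} (θ : EuclideanSpace ℝ (Fin d))
    (x : Fin n → EuclideanSpace ℝ (Fin d)) (σ : Equiv.Perm (Fin n)) : Prop :=
  Monotone fun i => ⟪x (σ i), θ⟫

/-- Triangle inequality for `√SWGG` along a fixed direction `θ`. -/
theorem sqrt_SWGG_triangle {n d : ℕ} (hn : 1 ≤ n) (hd : 1 ≤ d)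
    (θ : EuclideanSpace ℝ (Fin d)) (hθ : ‖θ‖ = 1)
    (x y z : Fin n → EuclideanSpace ℝ (Fin d))
    (σ τ π : Equiv.Perm (Fin n))
    (hσ : IsSorting θ x σ) (hτ : IsSorting θ y τ) (hπ : IsSorting θ z π) :
    Real.sqrt (SWGG x z σ π) ≤ Real.sqrt (SWGG x y σ τ) + Real.sqrt (SWGG y z τ π) := by
  set E := PiLp 2 (fun _ : Fin n => EuclideanSpace ℝ (Fin d))
  let A : E := WithLp.toLp 2 (fun i => x (σ i))
  let B : E := WithLp.toLp 2 (fun i => y (τ i))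
  let C : E := WithLp.toLp 2 (fun i => z (π i))
  have hnorm : ∀ u v : E, Real.sqrt (∑ i, ‖u i - v i‖ ^ 2) = ‖u - v‖ := by
    intro u v
    rw [show (∑ i, ‖u i - v i‖ ^ 2) = ‖u - v‖ ^ 2 from
      (PiLp.norm_sq_eq_of_L2 _ (u - v)).symm, Real.sqrt_sq (norm_nonneg _)]
  have key : Real.sqrt (∑ i, ‖x (σ i) - z (π i)‖ ^ 2) ≤
      Real.sqrt (∑ i, ‖x (σ i) - y (τ i)‖ ^ 2) +
      Real.sqrt (∑ i, ‖y (τ i) - z (π i)‖ ^ 2) := by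
    have h := norm_sub_le_norm_sub_add_norm_sub A B C
    rw [← hnorm A C, ← hnorm A B, ← hnorm B C] at h
    exact h
  have h0 : (0:ℝ) ≤ (n : ℝ)⁻¹ := by positivity
  simp only [SWGG, Real.sqrt_mul h0]
  have := mul_le_mul_of_nonneg_left key (Real.sqrt_nonneg ((n:ℝ)⁻¹))
  linarith [this]
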